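/- Fix a ladder system ⟨x_ξ : ξ ∈ lim(ω₁)⟩ on the set of all countable limit ordinals and let S be a stationary set of countable limit ordinals. Then the set of all r in Cantor space 2^ℕ (with the product topology) such that the linear order (S, <_r) contains both a copy of ω₁ (a strictly <_r-increasing ω₁-sequence) and a copy of −ω₁ (a strictly <_r-decreasing ω₁-sequence) is comeager in 2^ℕ. -/

import Mathlib

/-- The first uncountable ordinal, `ω₁`. -/
noncomputable def ω1 : Ordinal := (Cardinal.aleph 1).ord

/-- `x` is a ladder system on the set of all countable limit ordinals: for each countable
limit ordinal `ξ`, `x ξ : ℕ → Ordinal` is strictly increasing with range contained and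
cofinal in `ξ`. -/
def IsLadderSystem (x : Ordinal → ℕ → Ordinal) : Prop :=
  ∀ ξ : Ordinal, ξ < ω1 → Order.IsSuccLimit ξ →
    StrictMono (x ξ) ∧ (∀ n : ℕ, x ξ n < ξ) ∧ ∀ β < ξ, ∃ n : ℕ, β < x ξ n

/-- The linear order `<_r` determined by `r ∈ 2^ℕ`: `ξ <_r η` iff at the least `n` where
`x ξ` and `x η` differ, `x ξ n < x η n` is equivalent to `r n = 0` (here `0` is `false`). -/
def RLt (x : Ordinal → ℕ → Ordinal) (r : ℕ → Bool) (ξ η : Ordinal) : Prop :=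
  ∃ n : ℕ, (∀ m < n, x ξ m = x η m) ∧ x ξ n ≠ x η n ∧ (x ξ n < x η n ↔ r n = false)

/-- `C` is a club subset of `ω₁`: a set of countable ordinals which is unbounded in `ω₁`
and contains the supremum of each of its nonempty bounded subsets. -/
def IsClubIn (C : Set Ordinal) : Prop :=
  C ⊆ Set.Iio ω1 ∧ (∀ β < ω1, ∃ γ ∈ C, β < γ) ∧
    ∀ D ⊆ C, D.Nonempty → (∃ β < ω1, ∀ γ ∈ D, γ ≤ β) → sSup D ∈ C

/-- `S` is a stationary subset of `ω₁`: it meets every club subset of `ω₁`. -/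
def IsStat (S : Set Ordinal) : Prop := ∀ C : Set Ordinal, IsClubIn C → (S ∩ C).Nonempty

open Set Cardinal

lemma omega1_isLimit : Order.IsSuccLimit ω1 := Cardinal.isSuccLimit_ord (Cardinal.aleph0_le_aleph 1)

lemma omega1_pos : (0:Ordinal) < ω1 := omega1_isLimit.pos

lemma lt_succ_self_ord (β : Ordinal) : β < β + 1 := by
  rw [Ordinal.add_one_eq_succ]; exact Order.lt_succ β

lemma succ_lt_omega1 {β : Ordinal} (h : β < ω1) : β + 1 < ω1 := by
  rw [Ordinal.add_one_eq_succ]; exact omega1_isLimit.succ_lt h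

lemma sSup_lt_omega1 {A : Set Ordinal} (hA : A.Countable) (h : A ⊆ Set.Iio ω1) :
    sSup A < ω1 := by
  rcases A.eq_empty_or_nonempty with rfl | hne
  · simpa using omega1_pos
  · obtain ⟨f, rfl⟩ := hA.exists_eq_range hne
    have : iSup f < ω1 := by
      apply Ordinal.iSup_lt_ord_lift
      · unfold ω1
        rw [Cardinal.isRegular_aleph_one.cof_eq, Cardinal.mk_nat, Cardinal.lift_aleph0]
        exact Cardinal.aleph0_lt_aleph_one
      · exact fun i => h (mem_range_self i)
    simpa [iSup] using this

lemma countable_Iio_omega1 {β : Ordinal} (h : β < ω1) : (Set.Iio β).Countable := by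
  rw [Cardinal.countable_iff_lt_aleph_one, Ordinal.mk_Iio_ordinal, Cardinal.lift_lt_aleph_one]
  exact (Cardinal.lt_ord).1 h

lemma mem_le_sSup_bdd {A : Set Ordinal} {a : Ordinal} (ha : a ∈ A) (hb : A ⊆ Set.Iio ω1) :
    a ≤ sSup A := le_csSup ⟨ω1, fun _ hy => le_of_lt (hb hy)⟩ ha

lemma clubIio : IsClubIn (Set.Iio ω1) := by
  refine ⟨subset_rfl, fun β hβ => ⟨β+1, succ_lt_omega1 hβ, lt_succ_self_ord β⟩, ?_⟩
  rintro D _ hne ⟨β, hβ, hub⟩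
  exact lt_of_le_of_lt (csSup_le hne hub) hβ

lemma statNonempty {S : Set Ordinal} (h : IsStat S) : S.Nonempty := by
  obtain ⟨ν, hν, _⟩ := h _ clubIio; exact ⟨ν, hν⟩

lemma statMono {A B : Set Ordinal} (h : IsStat A) (hAB : A ⊆ B) : IsStat B := by
  intro C hC
  obtain ⟨ν, h1, h2⟩ := h C hC
  exact ⟨ν, hAB h1, h2⟩

lemma diagClub (C : Ordinal → Set Ordinal) (hC : ∀ γ < ω1, IsClubIn (C γ))
    {β : Ordinal} (hβ : β < ω1) :
    IsClubIn {ν | β < ν ∧ ν < ω1 ∧ ∀ γ < ν, ν ∈ C γ} := by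
  refine ⟨fun ν hν => hν.2.1, ?_, ?_⟩
  · -- unbounded
    intro β₀ hβ₀
    have step : ∀ b, ∃ b', b < ω1 →
        (b < b' ∧ b' < ω1 ∧ ∀ γ < b, ∃ e, e ∈ C γ ∧ b < e ∧ e ≤ b') := by
      intro b
      by_cases hb : b < ω1
      swap
      · exact ⟨0, fun h => absurd h hb⟩
      have hch : ∀ γ, ∃ e, γ < b → (e ∈ C γ ∧ b < e ∧ e < ω1) := by
        intro γ
        by_cases hγ : γ < b
        · obtain ⟨e, he, hbe⟩ := (hC γ (hγ.trans hb)).2.1 b hb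
          exact ⟨e, fun _ => ⟨he, hbe, (hC γ (hγ.trans hb)).1 he⟩⟩
        · exact ⟨0, fun h => absurd h hγ⟩
      choose ch hch using hch
      have hAsub : ch '' (Set.Iio b) ⊆ Set.Iio ω1 := by
        rintro _ ⟨γ, hγ, rfl⟩; exact (hch γ hγ).2.2
      have hsA : sSup (ch '' (Set.Iio b)) < ω1 :=
        sSup_lt_omega1 ((countable_Iio_omega1 hb).image _) hAsub
      have hthird : ∀ γ < b, ∃ e, e ∈ C γ ∧ b < e ∧
          e ≤ max (sSup (ch '' (Set.Iio b))) (b+1) := by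
        intro γ hγ
        exact ⟨ch γ, (hch γ hγ).1, (hch γ hγ).2.1,
          le_trans (mem_le_sSup_bdd (Set.mem_image_of_mem ch hγ) hAsub) (le_max_left _ _)⟩
      exact ⟨max (sSup (ch '' (Set.Iio b))) (b+1), fun _ =>
        ⟨lt_of_lt_of_le (lt_succ_self_ord b) (le_max_right _ _),
         max_lt hsA (succ_lt_omega1 hb), hthird⟩⟩
    choose F hF using step
    set seq : ℕ → Ordinal := fun k => Nat.rec (max β β₀ + 1) (fun _ ih => F ih) k with hseqdef
    have hseqS : ∀ k, seq (k+1) = F (seq k) := fun k => rfl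
    have hlt : ∀ k, seq k < ω1 := by
      intro k; induction k with
      | zero => exact succ_lt_omega1 (max_lt hβ hβ₀)
      | succ k ih => rw [hseqS k]; exact (hF _ ih).2.1
    have hmono : ∀ k, seq k < seq (k+1) := fun k => by
      rw [hseqS k]; exact (hF _ (hlt k)).1
    have hmono' : ∀ j k, j ≤ k → seq j ≤ seq k := by
      intro j k hjk
      induction k with
      | zero => rw [Nat.le_zero.1 hjk]
      | succ k ih =>
        rcases Nat.lt_or_ge j (k+1) with h | h
        · exact le_trans (ih (Nat.lt_succ_iff.1 h)) (le_of_lt (hmono k))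
        · rw [Nat.le_antisymm hjk h]
    have hrsub : Set.range seq ⊆ Set.Iio ω1 := by rintro _ ⟨k, rfl⟩; exact hlt k
    set ν := sSup (Set.range seq) with hνdef
    have hνlt : ν < ω1 := sSup_lt_omega1 (countable_range _) hrsub
    have hle : ∀ k, seq k ≤ ν := fun k => mem_le_sSup_bdd (mem_range_self k) hrsub
    have hs0 : max β β₀ < seq 0 := lt_succ_self_ord _
    have hβν : β < ν := lt_of_le_of_lt (le_max_left _ _) (lt_of_lt_of_le hs0 (hle 0))
    have hβ₀ν : β₀ < ν := lt_of_le_of_lt (le_max_right _ _) (lt_of_lt_of_le hs0 (hle 0))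
    refine ⟨ν, ⟨hβν, hνlt, ?_⟩, hβ₀ν⟩
    intro γ hγ
    have hk : ∃ k, γ < seq k := by
      by_contra hcon; push_neg at hcon
      exact absurd (csSup_le ⟨seq 0, mem_range_self 0⟩
        (by rintro _ ⟨k, rfl⟩; exact hcon k)) (not_le.2 hγ)
    obtain ⟨k, hk⟩ := hk
    have hwit : ∀ j, ∃ e, e ∈ C γ ∧ seq (k+j) < e ∧ e ≤ seq (k+j+1) := by
      intro j
      exact (hF (seq (k+j)) (hlt _)).2.2 γ
        (lt_of_lt_of_le hk (hmono' k (k+j) (Nat.le_add_right _ _)))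
    choose ee hee1 hee2 hee3 using hwit
    have hA'sub : Set.range ee ⊆ C γ := by rintro _ ⟨j, rfl⟩; exact hee1 j
    have hA'bdd : ∀ a ∈ Set.range ee, a ≤ ν := by
      rintro _ ⟨j, rfl⟩; exact le_trans (hee3 j) (hle (k+j+1))
    have h1 : sSup (Set.range ee) ≤ ν := csSup_le ⟨ee 0, mem_range_self 0⟩ hA'bdd
    have h2 : ν ≤ sSup (Set.range ee) := by
      apply csSup_le ⟨seq 0, mem_range_self 0⟩
      rintro _ ⟨j, rfl⟩
      calc seq j ≤ seq (k+j) := hmono' j (k+j) (Nat.le_add_left _ _)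
        _ ≤ ee j := le_of_lt (hee2 j)
        _ ≤ sSup (Set.range ee) := le_csSup ⟨ν, hA'bdd⟩ (mem_range_self j)
    have heq : sSup (Set.range ee) = ν := le_antisymm h1 h2
    have hmem := (hC γ (hγ.trans hνlt)).2.2 (Set.range ee) hA'sub
      ⟨ee 0, mem_range_self 0⟩ ⟨ν, hνlt, hA'bdd⟩
    rwa [heq] at hmem
  · -- closed
    rintro Dsub hDsub hne ⟨β₁, hβ₁, hub⟩
    obtain ⟨d, hd⟩ := hne
    have hσle : sSup Dsub ≤ β₁ := csSup_le ⟨d, hd⟩ hub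
    have hdle : d ≤ sSup Dsub := le_csSup ⟨β₁, hub⟩ hd
    have hσω : sSup Dsub < ω1 := lt_of_le_of_lt hσle hβ₁
    refine ⟨lt_of_lt_of_le (hDsub hd).1 hdle, hσω, ?_⟩
    intro γ hγ
    have hTne : ∃ t₀, t₀ ∈ Dsub ∧ γ < t₀ := by
      by_contra hc; push_neg at hc
      exact absurd (csSup_le ⟨d, hd⟩ hc) (not_le.2 hγ)
    obtain ⟨t₀, ht₀1, ht₀2⟩ := hTne
    have hTsub : {d' ∈ Dsub | γ < d'} ⊆ C γ := fun d' hd' => (hDsub hd'.1).2.2 γ hd'.2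
    have hT1 : sSup {d' ∈ Dsub | γ < d'} ≤ sSup Dsub :=
      csSup_le ⟨t₀, ht₀1, ht₀2⟩ (fun d' hd' => le_csSup ⟨β₁, hub⟩ hd'.1)
    have hT2 : sSup Dsub ≤ sSup {d' ∈ Dsub | γ < d'} := by
      apply csSup_le ⟨d, hd⟩
      intro d' hd'
      rcases lt_or_ge γ d' with h | h
      · exact le_csSup ⟨β₁, fun y hy => hub y hy.1⟩ ⟨hd', h⟩
      · exact le_trans h (le_trans (le_of_lt ht₀2)
          (le_csSup ⟨β₁, fun y hy => hub y hy.1⟩ ⟨ht₀1, ht₀2⟩))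
    have hTeq : sSup {d' ∈ Dsub | γ < d'} = sSup Dsub := le_antisymm hT1 hT2
    have hmem := (hC γ (hγ.trans hσω)).2.2 {d' ∈ Dsub | γ < d'} hTsub
      ⟨t₀, ht₀1, ht₀2⟩ ⟨β₁, hβ₁, fun y hy => hub y hy.1⟩
    rwa [hTeq] at hmem

lemma fodor {S : Set Ordinal} (hsub : S ⊆ Set.Iio ω1) (hst : IsStat S)
    (g : Ordinal → Ordinal) (hreg : ∀ ν ∈ S, g ν < ν) :
    ∃ γ < ω1, IsStat {ν ∈ S | g ν = γ} := by
  by_contra hcon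
  push_neg at hcon
  have hch : ∀ γ, ∃ Cs, IsClubIn Cs ∧ (γ < ω1 → {ν ∈ S | g ν = γ} ∩ Cs = ∅) := by
    intro γ
    by_cases hγ : γ < ω1
    · have := hcon γ hγ
      rw [IsStat] at this
      push_neg at this
      obtain ⟨Cs, hCs1, hCs2⟩ := this
      exact ⟨Cs, hCs1, fun _ => hCs2⟩
    · exact ⟨Set.Iio ω1, clubIio, fun h => absurd h hγ⟩
  choose Cfun hCfun1 hCfun2 using hch
  obtain ⟨ν, hνS, hνD⟩ := hst _ (diagClub Cfun (fun γ _ => hCfun1 γ) omega1_pos)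
  have hγ0 : g ν < ν := hreg ν hνS
  have hν1 : ν ∈ Cfun (g ν) := hνD.2.2 (g ν) hγ0
  have : ν ∈ {ν' ∈ S | g ν' = g ν} ∩ Cfun (g ν) := ⟨⟨hνS, rfl⟩, hν1⟩
  rw [hCfun2 (g ν) (hγ0.trans (hsub hνS))] at this
  exact this

noncomputable instance : WellFoundedRelation Ordinal := ⟨(· < ·), Ordinal.lt_wf⟩

noncomputable def enumB (B : Set Ordinal) (ξ : Ordinal) : Ordinal :=
  sInf {γ | γ ∈ B ∧ ∀ η, ∀ _ : η < ξ, enumB B η < γ}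
termination_by ξ

lemma enumB_spec {B : Set Ordinal} (hBsub : B ⊆ Set.Iio ω1)
    (hBunb : ∀ β < ω1, ∃ γ ∈ B, β < γ) :
    ∀ ξ, ξ < ω1 → enumB B ξ ∈ B ∧ ∀ η, η < ξ → enumB B η < enumB B ξ := by
  intro ξ
  induction ξ using Ordinal.induction with
  | _ ξ IH =>
    intro hξ
    have hprev : (enumB B '' Set.Iio ξ) ⊆ Set.Iio ω1 := by
      rintro _ ⟨η, hη, rfl⟩; exact hBsub (IH η hη (hη.trans hξ)).1
    have hsup : sSup (enumB B '' Set.Iio ξ) < ω1 :=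
      sSup_lt_omega1 ((countable_Iio_omega1 hξ).image _) hprev
    obtain ⟨γ₀, hγ₀B, hγ₀⟩ := hBunb _ hsup
    have hne : γ₀ ∈ {γ | γ ∈ B ∧ ∀ η, ∀ _ : η < ξ, enumB B η < γ} := by
      refine ⟨hγ₀B, fun η hη => ?_⟩
      exact lt_of_le_of_lt (mem_le_sSup_bdd (Set.mem_image_of_mem _ hη) hprev) hγ₀
    have hmem := csInf_mem (Set.nonempty_of_mem hne)
    rw [← enumB] at hmem
    exact ⟨hmem.1, fun η hη => hmem.2 η hη⟩

lemma chain_of_level (x : Ordinal → ℕ → Ordinal) (hx : IsLadderSystem x)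
    (S : Set Ordinal) (hSsub : ∀ α ∈ S, α < ω1 ∧ Order.IsSuccLimit α)
    (n : ℕ) (t : ℕ → Ordinal)
    (hunb : ∀ β, β < ω1 → ∃ γ, β < γ ∧
      IsStat {ν ∈ S | (∀ i < n, x ν i = t i) ∧ x ν n = γ}) :
    ∃ f : Ordinal → Ordinal, (∀ ξ, ξ < ω1 → f ξ ∈ S) ∧
      ∀ ξ η : Ordinal, ξ < ω1 → η < ω1 → ξ < η →
        (∀ m < n, x (f ξ) m = x (f η) m) ∧ x (f ξ) n < x (f η) n := by
  classical
  set fib : Ordinal → Set Ordinal :=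
    fun γ => {ν ∈ S | (∀ i < n, x ν i = t i) ∧ x ν n = γ} with hfib
  set B : Set Ordinal := {γ | IsStat (fib γ)} with hB
  have hBsub : B ⊆ Set.Iio ω1 := by
    intro γ hγ
    obtain ⟨ν, hνS, _, hνn⟩ := statNonempty hγ
    have hν := hSsub ν hνS
    exact lt_trans (hνn ▸ (hx ν hν.1 hν.2).2.1 n) hν.1
  have hBunb : ∀ β, β < ω1 → ∃ γ ∈ B, β < γ := by
    intro β hβ; obtain ⟨γ, h1, h2⟩ := hunb β hβ; exact ⟨γ, h2, h1⟩
  set w : Ordinal → Ordinal :=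
    fun γ => if h : IsStat (fib γ) then (statNonempty h).choose else 0 with hw
  have hwspec : ∀ γ ∈ B, w γ ∈ fib γ := by
    intro γ hγ
    have hst : IsStat (fib γ) := hγ
    simp only [hw, dif_pos hst]
    exact (statNonempty hst).choose_spec
  refine ⟨fun ξ => w (enumB B ξ), ?_, ?_⟩
  · intro ξ hξ
    exact (hwspec _ ((enumB_spec hBsub (fun β hβ => hBunb β hβ) ξ hξ).1)).1
  · intro ξ η hξ hη hξη
    have hξs := enumB_spec hBsub (fun β hβ => hBunb β hβ) ξ hξ
    have hηs := enumB_spec hBsub (fun β hβ => hBunb β hβ) η hη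
    have hwξ := hwspec _ hξs.1
    have hwη := hwspec _ hηs.1
    refine ⟨fun m hm => ?_, ?_⟩
    · rw [hwξ.2.1 m hm, hwη.2.1 m hm]
    · rw [hwξ.2.2, hwη.2.2]
      exact hηs.2 ξ hξη

lemma keyLemma (x : Ordinal → ℕ → Ordinal) (hx : IsLadderSystem x)
    (S' : Set Ordinal) (hS'sub : ∀ ν ∈ S', ν < ω1 ∧ Order.IsSuccLimit ν) (hstat' : IsStat S')
    (m : ℕ) (hagree : ∀ ν ∈ S', ∀ ν' ∈ S', ∀ i < m, x ν i = x ν' i) :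
    ∃ n, m ≤ n ∧ ∃ t : ℕ → Ordinal, ∀ β, β < ω1 → ∃ γ, β < γ ∧
      IsStat {ν ∈ S' | (∀ i < n, x ν i = t i) ∧ x ν n = γ} := by
  classical
  by_contra hcon
  push_neg at hcon
  obtain ⟨ν₀, hν₀⟩ := statNonempty hstat'
  set StL : List Ordinal → Set Ordinal :=
    fun l => {ν | ν ∈ S' ∧ ∀ i, i < l.length → x ν (m + i) = l.getD i 0} with hStL
  set tf : List Ordinal → ℕ → Ordinal :=
    fun l i => if i < m then x ν₀ i else l.getD (i - m) 0 with htf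
  have hcon' : ∀ (l : List Ordinal), ∃ β, β < ω1 ∧ ∀ γ, β < γ →
      ¬ IsStat {ν ∈ S' | (∀ i < m + l.length, x ν i = tf l i) ∧ x ν (m + l.length) = γ} :=
    fun l => hcon (m + l.length) (Nat.le_add_right _ _) (tf l)
  choose bfun hbfun1 hbfun2 using hcon'
  have hSt_eq : ∀ (l : List Ordinal) (γ : Ordinal), StL (l ++ [γ]) =
      {ν | ν ∈ S' ∧ (∀ i < m + l.length, x ν i = tf l i) ∧ x ν (m + l.length) = γ} := by
    intro l γ
    ext ν
    simp only [hStL, htf, Set.mem_setOf_eq, List.length_append, List.length_singleton]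
    constructor
    · rintro ⟨hνS, hco⟩
      refine ⟨hνS, fun i hi => ?_, ?_⟩
      · by_cases him : i < m
        · rw [if_pos him]; exact hagree ν hνS ν₀ hν₀ i him
        · rw [if_neg him]
          have hj : i - m < l.length := by omega
          have hco' := hco (i - m) (by omega)
          rw [List.getD_append _ _ _ _ hj] at hco'
          rw [← hco']
          congr 1
          omega
      · have hco' := hco l.length (by omega)
        rw [List.getD_append_right _ _ _ _ (le_refl _), Nat.sub_self] at hco'
        simpa using hco'
    · rintro ⟨hνS, hagr, hlast⟩
      refine ⟨hνS, fun i hi => ?_⟩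
      rcases Nat.lt_or_ge i l.length with h | h
      · rw [List.getD_append _ _ _ _ h]
        have hthis := hagr (m + i) (by omega)
        rw [if_neg (by omega), Nat.add_sub_cancel_left] at hthis
        exact hthis
      · have hieq : i = l.length := by omega
        subst hieq
        rw [List.getD_append_right _ _ _ _ (le_refl _), Nat.sub_self]
        simpa using hlast
  have hmonoSt : ∀ (l : List Ordinal) (γ : Ordinal), StL (l ++ [γ]) ⊆ StL l := by
    intro l γ ν hν
    refine ⟨hν.1, fun i hi => ?_⟩
    rw [← List.getD_append l [γ] 0 i hi]
    exact hν.2 i (by rw [List.length_append, List.length_singleton]; omega)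
  set TL : Set (List Ordinal) := {l | IsStat (StL l)} with hTL
  have hnil : [] ∈ TL := by
    refine statMono hstat' ?_
    intro ν hν
    exact ⟨hν, fun i hi => by simp at hi⟩
  have hlev : ∀ k : ℕ, {l | l ∈ TL ∧ l.length = k}.Countable := by
    intro k
    induction k with
    | zero =>
      apply Set.Countable.mono _ (Set.countable_singleton ([] : List Ordinal))
      rintro l ⟨_, hlen⟩
      simp [List.length_eq_zero_iff.1 hlen]
    | succ k ih =>
      have hsub : {l | l ∈ TL ∧ l.length = k + 1} ⊆
          ⋃ l ∈ {l | l ∈ TL ∧ l.length = k},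
            (fun γ => l ++ [γ]) '' (Set.Iio (bfun l + 1)) := by
        rintro l' ⟨hl'T, hl'len⟩
        rcases List.eq_nil_or_concat l' with rfl | ⟨L, b, hc⟩
        · simp at hl'len
        · rw [List.concat_eq_append] at hc
          subst hc
          have hLlen : L.length = k := by
            rw [List.length_append, List.length_singleton] at hl'len; omega
          have hLT : L ∈ TL := statMono hl'T (hmonoSt L b)
          have hble : b ≤ bfun L := by
            by_contra hgt
            push_neg at hgt
            exact hbfun2 L b hgt (by rw [← hSt_eq]; exact hl'T)
          exact Set.mem_biUnion ⟨hLT, hLlen⟩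
            ⟨b, lt_of_le_of_lt hble (lt_succ_self_ord _), rfl⟩
      exact Set.Countable.mono hsub (Set.Countable.biUnion ih (fun l _ =>
        (countable_Iio_omega1 (succ_lt_omega1 (hbfun1 l))).image _))
  have hTLc : TL.Countable := by
    have hsub : TL ⊆ ⋃ k : ℕ, {l | l ∈ TL ∧ l.length = k} :=
      fun l hl => Set.mem_iUnion.2 ⟨l.length, hl, rfl⟩
    exact Set.Countable.mono hsub (Set.countable_iUnion hlev)
  set V : Set Ordinal := ⋃ l ∈ TL, {γ | γ ∈ l} with hV
  have hVc : V.Countable := Set.Countable.biUnion hTLc (fun l _ => by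
    apply Set.Countable.mono _ (Set.countable_range (fun i : Fin l.length => l.get i))
    intro γ hγ
    obtain ⟨i, hi⟩ := List.mem_iff_get.1 hγ
    exact ⟨i, hi⟩)
  have hVsub : V ⊆ Set.Iio ω1 := by
    intro γ hγ
    rw [hV] at hγ
    obtain ⟨l, hlT, hγl⟩ := Set.mem_iUnion₂.1 hγ
    obtain ⟨⟨i, hi⟩, hgi⟩ := List.mem_iff_get.1 hγl
    obtain ⟨ν, hνSt⟩ := statNonempty hlT
    have h1 : x ν (m + i) = γ := by
      rw [hνSt.2 i hi, List.getD_eq_getElem _ _ hi, ← hgi]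
      simp
    have hν := hS'sub ν hνSt.1
    exact lt_trans (h1 ▸ (hx ν hν.1 hν.2).2.1 (m+i)) hν.1
  have hδ : sSup V < ω1 := sSup_lt_omega1 hVc hVsub
  set EE : List Ordinal → Set Ordinal :=
    fun l => {ν | ν ∈ StL l ∧ ¬ IsStat (StL (l ++ [x ν (m + l.length)]))} with hEE
  have hEns : ∀ l ∈ TL, ¬ IsStat (EE l) := by
    intro l _ hEst
    have hEsub : EE l ⊆ Set.Iio ω1 := fun ν hν => (hS'sub ν hν.1.1).1
    obtain ⟨γ, _, hγst⟩ := fodor hEsub hEst (fun ν => x ν (m + l.length))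
      (fun ν hν => (hx ν (hS'sub ν hν.1.1).1 (hS'sub ν hν.1.1).2).2.1 _)
    obtain ⟨ν₁, hν₁⟩ := statNonempty hγst
    have hbad : ¬ IsStat (StL (l ++ [γ])) := by
      have hb := hν₁.1.2
      rwa [hν₁.2] at hb
    apply hbad
    refine statMono hγst ?_
    rintro ν ⟨⟨hνSt, _⟩, hνγ⟩
    refine ⟨hνSt.1, fun i hi => ?_⟩
    rw [List.length_append, List.length_singleton] at hi
    rcases Nat.lt_or_ge i l.length with h | h
    · rw [List.getD_append _ _ _ _ h]
      exact hνSt.2 i h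
    · have hieq : i = l.length := by omega
      subst hieq
      rw [List.getD_append_right _ _ _ _ (le_refl _), Nat.sub_self]
      simpa using hνγ
  have hDl : ∀ l, ∃ Cs, IsClubIn Cs ∧ (l ∈ TL → Cs ∩ EE l = ∅) := by
    intro l
    by_cases hl : l ∈ TL
    · have h1 := hEns l hl
      rw [IsStat] at h1
      push_neg at h1
      obtain ⟨Cs, hCs1, hCs2⟩ := h1
      refine ⟨Cs, hCs1, fun _ => ?_⟩
      rw [Set.inter_comm]
      exact hCs2
    · exact ⟨Set.Iio ω1, clubIio, fun h => absurd h hl⟩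
  choose Dfun hD1 hD2 using hDl
  obtain ⟨e, he⟩ := hTLc.exists_eq_range ⟨[], hnil⟩
  set C' : Ordinal → Set Ordinal := fun γ =>
    if h : ∃ k : ℕ, (k : Ordinal) = γ then Dfun (e h.choose) else Set.Iio ω1 with hC'
  have hC'club : ∀ γ, γ < ω1 → IsClubIn (C' γ) := by
    intro γ _
    by_cases h : ∃ k : ℕ, (k : Ordinal) = γ
    · have hrw : C' γ = Dfun (e h.choose) := dif_pos h
      rw [hrw]; exact hD1 _
    · have hrw : C' γ = Set.Iio ω1 := dif_neg h
      rw [hrw]; exact clubIio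
  have hω0 : Ordinal.omega0 < ω1 := by
    unfold ω1
    rw [← Cardinal.ord_aleph0]
    exact Cardinal.ord_lt_ord.2 Cardinal.aleph0_lt_aleph_one
  obtain ⟨ν, hνS', hνD⟩ := hstat' _ (diagClub C' hC'club (max_lt hδ hω0))
  have hνδ : sSup V < ν := lt_of_le_of_lt (le_max_left _ _) hνD.1
  have hνω0 : Ordinal.omega0 < ν := lt_of_le_of_lt (le_max_right _ _) hνD.1
  have hνC : ∀ k : ℕ, ν ∈ Dfun (e k) := by
    intro k
    have hk : ((k : ℕ) : Ordinal) < ν := lt_trans (Ordinal.nat_lt_omega0 k) hνω0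
    have hmem : ν ∈ C' ((k : ℕ) : Ordinal) := hνD.2.2 _ hk
    have hex : ∃ k' : ℕ, ((k' : ℕ) : Ordinal) = ((k : ℕ) : Ordinal) := ⟨k, rfl⟩
    have hrw : C' ((k : ℕ) : Ordinal) = Dfun (e hex.choose) := dif_pos hex
    have hck : hex.choose = k := Nat.cast_injective hex.choose_spec
    rw [hrw, hck] at hmem
    exact hmem
  have hνDl : ∀ l ∈ TL, ν ∈ Dfun l := by
    intro l hl
    rw [he] at hl
    obtain ⟨k, hk⟩ := hl
    rw [← hk]
    exact hνC k
  set lf : ℕ → List Ordinal := fun k => (List.range k).map (fun i => x ν (m + i)) with hlf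
  have hlflen : ∀ k, (lf k).length = k := by intro k; simp [hlf]
  have hlfget : ∀ k i, i < k → (lf k).getD i 0 = x ν (m + i) := by
    intro k i hik
    have h' : i < (lf k).length := by rw [hlflen]; exact hik
    rw [List.getD_eq_getElem _ _ h']
    simp [hlf]
  have hνStl : ∀ k, ν ∈ StL (lf k) := by
    intro k
    refine ⟨hνS', fun i hi => ?_⟩
    rw [hlfget k i (by rwa [hlflen] at hi)]
  have hlfsucc : ∀ k, lf (k+1) = lf k ++ [x ν (m + k)] := by
    intro k
    rw [hlf]
    simp only [List.range_succ, List.map_append]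
    rfl
  have hstep : ∀ k, lf k ∈ TL := by
    intro k
    induction k with
    | zero =>
      have h0 : lf 0 = [] := by simp [hlf]
      rw [h0]; exact hnil
    | succ k ih =>
      have hνnot : ν ∉ EE (lf k) := by
        have hdisj := hD2 (lf k) ih
        intro hmem
        have hcontr : ν ∈ Dfun (lf k) ∩ EE (lf k) := ⟨hνDl _ ih, hmem⟩
        rw [hdisj] at hcontr
        exact hcontr
      have hstat2 : IsStat (StL (lf k ++ [x ν (m + (lf k).length)])) := by
        by_contra hns
        exact hνnot ⟨hνStl k, hns⟩
      rw [hlflen] at hstat2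
      rwa [← hlfsucc] at hstat2
  have hbound : ∀ k, x ν (m + k) ≤ sSup V := by
    intro k
    apply mem_le_sSup_bdd _ hVsub
    rw [hV]
    apply Set.mem_biUnion (hstep (k+1))
    rw [hlfsucc]
    simp
  obtain ⟨hm1, hm2, hm3⟩ := hx ν (hS'sub ν hνS').1 (hS'sub ν hνS').2
  obtain ⟨j, hj⟩ := hm3 (sSup V) hνδ
  rcases Nat.lt_or_ge j m with h | h
  · have hlt : x ν j < x ν (m + 0) := hm1 (by omega)
    exact absurd (lt_of_lt_of_le (lt_trans hj hlt) (hbound 0)) (lt_irrefl _)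
  · have hjeq : j = m + (j - m) := by omega
    rw [hjeq] at hj
    exact absurd (lt_of_lt_of_le hj (hbound (j - m))) (lt_irrefl _)

lemma levels (x : Ordinal → ℕ → Ordinal) (hx : IsLadderSystem x)
    (S : Set Ordinal) (hSsub : ∀ α ∈ S, α < ω1 ∧ Order.IsSuccLimit α) (hstat : IsStat S) :
    ∀ k : ℕ, ∃ n, k ≤ n ∧ ∃ t : ℕ → Ordinal, ∀ β, β < ω1 → ∃ γ, β < γ ∧
      IsStat {ν ∈ S | (∀ i < n, x ν i = t i) ∧ x ν n = γ} := by
  have aux : ∀ k : ℕ, ∃ S' : Set Ordinal, S' ⊆ S ∧ (∀ ν ∈ S', ν < ω1 ∧ Order.IsSuccLimit ν) ∧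
      IsStat S' ∧ ∃ m : ℕ, k ≤ m ∧ ∀ ν ∈ S', ∀ ν' ∈ S', ∀ i < m, x ν i = x ν' i := by
    intro k
    induction k with
    | zero =>
      exact ⟨S, subset_rfl, hSsub, hstat, 0, le_refl 0, fun ν _ ν' _ i hi => by omega⟩
    | succ k ih =>
      obtain ⟨S', hsub, hprop, hst, m, hkm, hagr⟩ := ih
      obtain ⟨n, hmn, t, hunb⟩ := keyLemma x hx S' hprop hst m hagr
      obtain ⟨γ, -, hγstat⟩ := hunb 0 omega1_pos
      refine ⟨{ν | ν ∈ S' ∧ (∀ i < n, x ν i = t i) ∧ x ν n = γ},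
        fun ν hν => hsub hν.1, fun ν hν => hprop ν hν.1, hγstat, n + 1, by omega, ?_⟩
      intro ν hν ν' hν' i hi
      rcases Nat.lt_or_ge i n with h | h
      · rw [hν.2.1 i h, hν'.2.1 i h]
      · have hieq : i = n := by omega
        subst hieq
        rw [hν.2.2, hν'.2.2]
  intro k
  obtain ⟨S', hsub, hprop, hst, m, hkm, hagr⟩ := aux k
  obtain ⟨n, hmn, t, hunb⟩ := keyLemma x hx S' hprop hst m hagr
  refine ⟨n, le_trans hkm hmn, t, fun β hβ => ?_⟩
  obtain ⟨γ, hβγ, hγstat⟩ := hunb β hβ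
  refine ⟨γ, hβγ, statMono hγstat ?_⟩
  intro ν hν
  exact ⟨hsub hν.1, hν.2⟩

lemma denseOpen_level (L : Set ℕ) (hL : ∀ k : ℕ, ∃ n ∈ L, k ≤ n) (b : Bool) :
    {r : ℕ → Bool | ∃ n ∈ L, r n = b} ∈ residual (ℕ → Bool) := by
  apply residual_of_dense_open
  · have heq : {r : ℕ → Bool | ∃ n ∈ L, r n = b} = ⋃ n ∈ L, {r : ℕ → Bool | r n = b} := by
      ext r; simp
    rw [heq]
    refine isOpen_biUnion (fun n _ => ?_)
    have : {r : ℕ → Bool | r n = b} = (fun r : ℕ → Bool => r n) ⁻¹' {b} := rfl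
    rw [this]
    exact (isOpen_discrete {b}).preimage (continuous_apply n)
  · rw [dense_iff_inter_open]
    intro U hU hUne
    obtain ⟨r₀, hr₀⟩ := hUne
    obtain ⟨I, u, hIu, hpi⟩ := isOpen_pi_iff.1 hU r₀ hr₀
    obtain ⟨n, hnL, hn⟩ := hL ((I.sup id) + 1)
    have hinotn : ∀ i ∈ I, i ≠ n := by
      intro i hi hieq
      have hle := Finset.le_sup (f := id) hi
      simp only [id] at hle
      omega
    refine ⟨Function.update r₀ n b, hpi ?_, n, hnL, Function.update_self n b r₀⟩
    intro i hi
    rw [Function.update_of_ne (hinotn i hi)]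
    exact (hIu i hi).2

/-- For a stationary set `S` of countable limit ordinals, the set of `r` in Cantor space for
which `(S, <_r)` contains both a strictly increasing and a strictly decreasing `ω₁`-sequence
is comeager. -/
theorem comeager_copies_of_omega1_and_reverse (x : Ordinal → ℕ → Ordinal)
    (hx : IsLadderSystem x) (S : Set Ordinal)
    (hSsub : ∀ α ∈ S, α < ω1 ∧ Order.IsSuccLimit α) (hstat : IsStat S) :
    {r : ℕ → Bool |
        (∃ f : Ordinal → Ordinal, (∀ ξ < ω1, f ξ ∈ S) ∧
          ∀ ξ η : Ordinal, ξ < ω1 → η < ω1 → ξ < η → RLt x r (f ξ) (f η)) ∧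
        (∃ f : Ordinal → Ordinal, (∀ ξ < ω1, f ξ ∈ S) ∧
          ∀ ξ η : Ordinal, ξ < ω1 → η < ω1 → ξ < η → RLt x r (f η) (f ξ))} ∈
      residual (ℕ → Bool) := by
  classical
  set L : Set ℕ := {n | ∃ t : ℕ → Ordinal, ∀ β, β < ω1 → ∃ γ, β < γ ∧
    IsStat {ν ∈ S | (∀ i < n, x ν i = t i) ∧ x ν n = γ}} with hLdef
  have hL : ∀ k : ℕ, ∃ n ∈ L, k ≤ n := by
    intro k
    obtain ⟨n, hkn, t, hunb⟩ := levels x hx S hSsub hstat k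
    exact ⟨n, ⟨t, hunb⟩, hkn⟩
  have hres := Filter.inter_mem (denseOpen_level L hL false) (denseOpen_level L hL true)
  apply Filter.mem_of_superset hres
  rintro r ⟨⟨n₁, hn₁L, hrn₁⟩, ⟨n₂, hn₂L, hrn₂⟩⟩
  obtain ⟨t₁, hunb₁⟩ := hn₁L
  obtain ⟨t₂, hunb₂⟩ := hn₂L
  obtain ⟨f₁, hf₁S, hf₁⟩ := chain_of_level x hx S hSsub n₁ t₁ hunb₁
  obtain ⟨f₂, hf₂S, hf₂⟩ := chain_of_level x hx S hSsub n₂ t₂ hunb₂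
  constructor
  · refine ⟨f₁, hf₁S, ?_⟩
    intro ξ η hξ hη hξη
    obtain ⟨hagr, hlt⟩ := hf₁ ξ η hξ hη hξη
    exact ⟨n₁, hagr, ne_of_lt hlt, iff_of_true hlt hrn₁⟩
  · refine ⟨f₂, hf₂S, ?_⟩
    intro ξ η hξ hη hξη
    obtain ⟨hagr, hlt⟩ := hf₂ ξ η hξ hη hξη
    refine ⟨n₂, fun mm hmm => (hagr mm hmm).symm, (ne_of_lt hlt).symm, ?_⟩
    refine iff_of_false (fun h2 => absurd (lt_trans h2 hlt) (lt_irrefl _)) ?_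
    rw [hrn₂]
    simp
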